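/- If [x, x] = 0 for every x ∈ E, then g is the identity map of K, K is commutative, and [x, y] = −[y, x] for all x, y ∈ E. -/
import Mathlib


/-- If a reflexive nondegenerate `g`-sesquilinear form on a space of dimension
at least 3 is alternating (`[x,x] = 0` for all `x`), then `g` is the identity,
`K` is commutative, and the form is skew-symmetric. -/
theorem alternating_sesquilinear {K E : Type*} [DivisionRing K] [AddCommGroup E] [Module K E]
    (hdim : 3 ≤ Module.rank K E)
    (g : K → K) (hgbij : Function.Bijective g)
    (hgadd : ∀ a b : K, g (a + b) = g a + g b)
    (hgmul : ∀ a b : K, g (a * b) = g b * g a)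
    (B : E → E → K)
    (haddl : ∀ x y z : E, B (x + y) z = B x z + B y z)
    (haddr : ∀ x y z : E, B x (y + z) = B x y + B x z)
    (hsl : ∀ (ρ : K) (x y : E), B (ρ • x) y = ρ * B x y)
    (hsr : ∀ (ρ : K) (x y : E), B x (ρ • y) = B x y * g ρ)
    (hnd : ∀ a : E, (∀ x : E, B a x = 0) → a = 0)
    (hrefl : ∀ x y : E, B x y = 0 ↔ B y x = 0)
    (halt : ∀ x : E, B x x = 0) :
    (∀ ρ : K, g ρ = ρ) ∧ (∀ a b : K, a * b = b * a) ∧ (∀ x y : E, B x y = - B y x) := by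
  -- skew-symmetry
  have hskew : ∀ x y : E, B x y = - B y x := by
    intro x y
    have h := halt (x + y)
    rw [haddl, haddr, haddr, halt, halt, zero_add, add_zero] at h
    exact eq_neg_of_add_eq_zero_left h
  -- key identity : B x y * g ρ = ρ * B x y
  have hkey : ∀ (ρ : K) (x y : E), B x y * g ρ = ρ * B x y := by
    intro ρ x y
    have h1 : B x (ρ • y) = B x y * g ρ := hsr ρ x y
    have h2 : B x (ρ • y) = ρ * B x y := by
      rw [hskew x (ρ • y), hsl, hskew y x]
      rw [mul_neg, neg_neg]
    rw [← h1, h2]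
  -- nontriviality of E
  have hnt : Nontrivial E := by
    by_contra h
    have : Subsingleton E := not_nontrivial_iff_subsingleton.mp h
    rw [rank_subsingleton'] at hdim
    exact absurd hdim (by norm_num)
  obtain ⟨a, ha⟩ := exists_ne (0 : E)
  have : ¬ ∀ x : E, B a x = 0 := fun h => ha (hnd a h)
  push_neg at this
  obtain ⟨x, hx⟩ := this
  -- a pair with value 1
  set u := (B a x)⁻¹ • a with hu
  have hone : B u x = 1 := by
    rw [hu, hsl, inv_mul_cancel₀ hx]
  have hgid : ∀ ρ : K, g ρ = ρ := by
    intro ρ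
    have := hkey ρ u x
    rwa [hone, one_mul, mul_one] at this
  refine ⟨hgid, ?_, hskew⟩
  intro c ρ
  have hc : B (c • u) x = c := by rw [hsl, hone, mul_one]
  have := hkey ρ (c • u) x
  rwa [hc, hgid] at this
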